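/- Assume A is symmetric positive definite with condition number κ = λ_max(A)/λ_min(A). Then the aNGMRES(m, m+1) iterates from any u₀ satisfy ‖r_{j(m+1)}‖ ≤ χ(m+1)^j · ‖r₀‖ ≤ (2 ((√κ − 1)/(√κ + 1))^{m+1})^j · ‖r₀‖ for all j ≥ 1. -/

import Mathlib

open Matrix Polynomial Set

noncomputable section

/-- Matrix–vector product, landing in Euclidean space. -/
def mulVecE {n : ℕ} (M : Matrix (Fin n) (Fin n) ℝ) (v : EuclideanSpace ℝ (Fin n)) :
    EuclideanSpace ℝ (Fin n) :=
  WithLp.toLp 2 (M.mulVec v)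

/-- Residual `r(u) = A u - b`. -/
def res {n : ℕ} (A : Matrix (Fin n) (Fin n) ℝ) (b u : EuclideanSpace ℝ (Fin n)) :
    EuclideanSpace ℝ (Fin n) :=
  mulVecE A u - b

/-- Richardson fixed-point map `q(u) = (I - A) u + b = M u + b` with `M = I - A`. -/
def fp {n : ℕ} (A : Matrix (Fin n) (Fin n) ℝ) (b u : EuclideanSpace ℝ (Fin n)) :
    EuclideanSpace ℝ (Fin n) :=
  mulVecE (1 - A) u + b

/-- The NGMRES(m) least-squares objective at step `k`:
`β ↦ ‖r(q(u_k)) + Σ_{i=0}^m β_i (r(q(u_k)) - r(u_{k-i}))‖`. -/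
def ngObj {n : ℕ} (A : Matrix (Fin n) (Fin n) ℝ) (b : EuclideanSpace ℝ (Fin n))
    (m : ℕ) (prev : ℕ → EuclideanSpace ℝ (Fin n)) (k : ℕ) (β : Fin (m+1) → ℝ) : ℝ :=
  ‖res A b (fp A b (prev k)) +
    ∑ i : Fin (m+1), β i • (res A b (fp A b (prev k)) - res A b (prev (k - (i : ℕ))))‖

/-- `next` is produced from `prev (k-m), …, prev k` by a single NGMRES(m) step:
`next = q(u_k) + Σ_{i=0}^m β_i (q(u_k) - u_{k-i})` where `β` minimizes the
least-squares objective `ngObj`. -/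
def NGMRESStep {n : ℕ} (A : Matrix (Fin n) (Fin n) ℝ) (b : EuclideanSpace ℝ (Fin n))
    (m : ℕ) (prev : ℕ → EuclideanSpace ℝ (Fin n)) (k : ℕ)
    (next : EuclideanSpace ℝ (Fin n)) : Prop :=
  ∃ β : Fin (m+1) → ℝ,
    (∀ γ : Fin (m+1) → ℝ, ngObj A b m prev k β ≤ ngObj A b m prev k γ) ∧
    next = fp A b (prev k) +
      ∑ i : Fin (m+1), β i • (fp A b (prev k) - prev (k - (i : ℕ)))

/-- The spectral (ℓ²-operator) norm of a matrix. -/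
def opNorm {n : ℕ} (M : Matrix (Fin n) (Fin n) ℝ) : ℝ :=
  ‖(Matrix.toEuclideanCLM (𝕜 := ℝ) M : EuclideanSpace ℝ (Fin n) →L[ℝ] EuclideanSpace ℝ (Fin n))‖

/-- The 2-norm condition number `κ₂(U) = ‖U‖ ‖U⁻¹‖`. -/
def condNum {n : ℕ} (U : Matrix (Fin n) (Fin n) ℝ) : ℝ :=
  opNorm U * opNorm U⁻¹

/-- `ε(a,b,s)`: minimum over real polynomials `p` of degree at most `s` with `p(1) = 1`
of `max_{t ∈ [1/b, 1/a]} |p(t)|`. -/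
def eps (a b : ℝ) (s : ℕ) : ℝ :=
  sInf {t : ℝ | ∃ p : Polynomial ℝ, p.natDegree ≤ s ∧ p.eval 1 = 1 ∧
    t = sSup ((fun x => |p.eval x|) '' Set.Icc (1/b) (1/a))}

/-- `χ(s)`: minimum over real polynomials `p` of degree at most `s` with `p(1) = 1`
of `max_{λ ∈ Σ(M)} |p(λ)|`, where `Σ(M)` is the set of eigenvalues of `M`. -/
def chiSp {n : ℕ} (M : Matrix (Fin n) (Fin n) ℝ) (s : ℕ) : ℝ :=
  sInf {t : ℝ | ∃ p : Polynomial ℝ, p.natDegree ≤ s ∧ p.eval 1 = 1 ∧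
    t = sSup ((fun x => |p.eval x|) '' spectrum ℝ M)}

/-- The Krylov subspace `K_k(A, r) = span{r, Ar, …, A^{k-1} r}`. -/
def Krylov {n : ℕ} (A : Matrix (Fin n) (Fin n) ℝ) (r : EuclideanSpace ℝ (Fin n)) (k : ℕ) :
    Submodule ℝ (EuclideanSpace ℝ (Fin n)) :=
  Submodule.span ℝ (Set.range fun i : Fin k => mulVecE (A ^ (i : ℕ)) r)

/-- The matrix `S_k = [u_{k-m+1}-u_{k-m}, …, u_k-u_{k-1}, q(u_k)-u_k] ∈ ℝ^{n×(m+1)}`. -/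
def Smat {n : ℕ} (A : Matrix (Fin n) (Fin n) ℝ) (b : EuclideanSpace ℝ (Fin n))
    (prev : ℕ → EuclideanSpace ℝ (Fin n)) (k m : ℕ) :
    Matrix (Fin n) (Fin (m+1)) ℝ :=
  Matrix.of fun r c =>
    if (c : ℕ) < m then prev (k - m + c + 1) r - prev (k - m + c) r
    else fp A b (prev k) r - prev k r

/-- `u` is the sequence of aNGMRES(m, p) iterates (with `m = ⊤` giving aNGMRES(∞, p)):
if `p ∤ k` then `u_k = q(u_{k-1})`, and if `p ∣ k` then `u_k` is produced by one
NGMRES(min(m, k-1)) step from `u_{k-1-m_k}, …, u_{k-1}`. -/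
def aNGMRES {n : ℕ} (A : Matrix (Fin n) (Fin n) ℝ) (b : EuclideanSpace ℝ (Fin n))
    (m : ℕ∞) (p : ℕ) (u : ℕ → EuclideanSpace ℝ (Fin n)) : Prop :=
  ∀ k, 1 ≤ k →
    (¬ p ∣ k → u k = fp A b (u (k-1))) ∧
    (p ∣ k → NGMRESStep A b (min m ((k : ℕ∞) - 1)).toNat u (k-1) (u k))

variable {n : ℕ} (A : Matrix (Fin n) (Fin n) ℝ) (b : EuclideanSpace ℝ (Fin n))

lemma mulVecE_add (M : Matrix (Fin n) (Fin n) ℝ) (x y : EuclideanSpace ℝ (Fin n)) :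
    mulVecE M (x + y) = mulVecE M x + mulVecE M y := by
  ext i
  simp [mulVecE, Matrix.mulVec, dotProduct, mul_add, Finset.sum_add_distrib]

lemma mulVecE_sub (M : Matrix (Fin n) (Fin n) ℝ) (x y : EuclideanSpace ℝ (Fin n)) :
    mulVecE M (x - y) = mulVecE M x - mulVecE M y := by
  ext i
  simp [mulVecE, Matrix.mulVec, dotProduct, mul_sub, Finset.sum_sub_distrib]

lemma mulVecE_smul (M : Matrix (Fin n) (Fin n) ℝ) (c : ℝ) (x : EuclideanSpace ℝ (Fin n)) :
    mulVecE M (c • x) = c • mulVecE M x := by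
  ext i
  simp only [mulVecE, Matrix.mulVec, dotProduct, PiLp.smul_apply, smul_eq_mul,
    Finset.mul_sum]
  exact Finset.sum_congr rfl fun j _ => by show M i j * (c * x j) = _; ring

lemma mulVecE_mulVecE (M N : Matrix (Fin n) (Fin n) ℝ) (x : EuclideanSpace ℝ (Fin n)) :
    mulVecE M (mulVecE N x) = mulVecE (M * N) x := by
  simp [mulVecE, Matrix.mulVec_mulVec]

lemma mulVecE_one (x : EuclideanSpace ℝ (Fin n)) : mulVecE 1 x = x := by
  ext i
  simp [mulVecE]

lemma mulVecE_one_sub (x : EuclideanSpace ℝ (Fin n)) :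
    mulVecE (1 - A) x = x - mulVecE A x := by
  ext i
  show ((1 - A) *ᵥ x.ofLp) i = x.ofLp i - (A *ᵥ x.ofLp) i
  simp [Matrix.sub_mulVec]

lemma res_fp (v : EuclideanSpace ℝ (Fin n)) :
    res A b (fp A b v) = mulVecE (1 - A) (res A b v) := by
  have hcomm : A * (1 - A) = (1 - A) * A := by noncomm_ring
  simp only [res, fp, mulVecE_sub]
  show mulVecE A (mulVecE (1 - A) v + b) - b = mulVecE (1 - A) (mulVecE A v) - mulVecE (1 - A) b
  rw [mulVecE_add, mulVecE_mulVecE, hcomm, ← mulVecE_mulVecE,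
    mulVecE_one_sub A b, mulVecE_one_sub A (mulVecE A v)]
  abel

lemma res_add (x w : EuclideanSpace ℝ (Fin n)) :
    res A b (x + w) = res A b x + mulVecE A w := by
  simp only [res, mulVecE_add]; abel

lemma mulVecE_res_sub (x y : EuclideanSpace ℝ (Fin n)) :
    mulVecE A (x - y) = res A b x - res A b y := by
  simp only [res, mulVecE_sub]; abel

section Spec
variable {n : ℕ} {M : Matrix (Fin n) (Fin n) ℝ}

lemma aeval_mulVecE_eig (hM : M.IsHermitian) (p : Polynomial ℝ) (j : Fin n) :
    mulVecE (aeval M p) (hM.eigenvectorBasis j) =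
      p.eval (hM.eigenvalues j) • hM.eigenvectorBasis j := by
  have base : mulVecE M (hM.eigenvectorBasis j) = hM.eigenvalues j • hM.eigenvectorBasis j := by
    have := hM.mulVec_eigenvectorBasis j
    ext i
    have := congrFun this i
    simpa [mulVecE] using this
  induction p using Polynomial.induction_on with
  | C a =>
      have : (aeval M) (Polynomial.C a) = a • (1 : Matrix (Fin n) (Fin n) ℝ) := by
        simp [Algebra.algebraMap_eq_smul_one]
      rw [this]
      ext i
      simp only [mulVecE, Matrix.smul_mulVec, Matrix.one_mulVec]
      simp
  | add p q hp hq =>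
      have : mulVecE ((aeval M) (p + q)) (hM.eigenvectorBasis j)
          = mulVecE ((aeval M) p) (hM.eigenvectorBasis j)
            + mulVecE ((aeval M) q) (hM.eigenvectorBasis j) := by
        ext i
        simp only [map_add, mulVecE, Matrix.add_mulVec]
        rfl
      rw [this, hp, hq, Polynomial.eval_add, add_smul]
  | monomial k a ih =>
      have h1 : (Polynomial.C a * Polynomial.X ^ (k+1) : Polynomial ℝ)
          = Polynomial.X * (Polynomial.C a * Polynomial.X ^ k) := by ring
      have h2 : (aeval M) (Polynomial.C a * Polynomial.X ^ (k+1))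
          = M * (aeval M) (Polynomial.C a * Polynomial.X ^ k) := by
        rw [h1, _root_.map_mul]; simp
      rw [h2, ← mulVecE_mulVecE, ih, mulVecE_smul, base, smul_smul]
      congr 1
      simp only [Polynomial.eval_mul, Polynomial.eval_pow, Polynomial.eval_C, Polynomial.eval_X,
        pow_succ]
      ring
end Spec

section SpecBound
variable {n : ℕ} {M : Matrix (Fin n) (Fin n) ℝ}

lemma mulVecE_sum {ι : Type*} (t : Finset ι) (M : Matrix (Fin n) (Fin n) ℝ)
    (f : ι → EuclideanSpace ℝ (Fin n)) :
    mulVecE M (∑ s ∈ t, f s) = ∑ s ∈ t, mulVecE M (f s) := by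
  classical
  induction t using Finset.induction_on with
  | empty =>
      ext i
      simp [mulVecE, Matrix.mulVec, dotProduct]
  | insert _ _ hx ih =>
      rw [Finset.sum_insert hx, Finset.sum_insert hx, mulVecE_add, ih]

lemma spec_bound (hM : M.IsHermitian) (p : Polynomial ℝ) (r : EuclideanSpace ℝ (Fin n)) :
    ‖mulVecE (aeval M p) r‖ ≤ sSup ((fun x => |p.eval x|) '' spectrum ℝ M) * ‖r‖ := by
  classical
  set B := hM.eigenvectorBasis with hB
  set C := sSup ((fun x => |p.eval x|) '' spectrum ℝ M) with hCdef
  have hC0 : 0 ≤ C := Real.sSup_nonneg (by rintro t ⟨x, _, rfl⟩; positivity)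
  have hbdd : BddAbove ((fun x => |p.eval x|) '' spectrum ℝ M) :=
    (Matrix.finite_real_spectrum.image _).bddAbove
  have hCb : ∀ j, |p.eval (hM.eigenvalues j)| ≤ C := fun j =>
    le_csSup hbdd ⟨_, hM.eigenvalues_mem_spectrum_real j, rfl⟩
  have hdec : mulVecE (aeval M p) r
      = B.repr.symm (WithLp.toLp 2 (fun j => p.eval (hM.eigenvalues j) * B.repr r j)) := by
    conv_lhs => rw [← B.sum_repr r]
    rw [mulVecE_sum]
    have : ∀ j, mulVecE (aeval M p) (B.repr r j • B j)
        = (p.eval (hM.eigenvalues j) * B.repr r j) • B j := by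
      intro j
      rw [mulVecE_smul, aeval_mulVecE_eig hM, smul_smul, mul_comm]
    simp_rw [this]
    exact B.sum_repr_symm (WithLp.toLp 2 _)
  rw [hdec, LinearIsometryEquiv.norm_map]
  have hr : ‖r‖ = ‖B.repr r‖ := (B.repr.norm_map r).symm
  rw [hr, EuclideanSpace.norm_eq, EuclideanSpace.norm_eq]
  rw [← Real.sqrt_sq hC0, ← Real.sqrt_mul (sq_nonneg C)]
  apply Real.sqrt_le_sqrt
  rw [Finset.mul_sum]
  apply Finset.sum_le_sum
  intro j _
  have h1 : ‖(fun j => p.eval (hM.eigenvalues j) * B.repr r j) j‖ ^ 2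
      = |p.eval (hM.eigenvalues j)| ^ 2 * ‖B.repr r j‖ ^ 2 := by
    simp [Real.norm_eq_abs, abs_mul, mul_pow]
  rw [h1]
  apply mul_le_mul_of_nonneg_right _ (by positivity)
  exact pow_le_pow_left₀ (abs_nonneg _) (hCb j) 2
end SpecBound

section Iter
variable {n m : ℕ} (A : Matrix (Fin n) (Fin n) ℝ) (b : EuclideanSpace ℝ (Fin n))
  (u : ℕ → EuclideanSpace ℝ (Fin n))

lemma res_iter (hu : aNGMRES A b (m : ℕ∞) (m+1) u) (K : ℕ) (hK : (m+1) ∣ K) :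
    ∀ i, i ≤ m → res A b (u (K + i)) = mulVecE ((1-A)^i) (res A b (u K)) := by
  intro i
  induction i with
  | zero => intro _; simp [pow_zero, mulVecE_one]
  | succ i ih =>
      intro h
      have hi : i ≤ m := Nat.le_of_succ_le h
      have hnd : ¬ (m+1) ∣ (K + i + 1) := by
        intro hd
        have h2 : (m+1) ∣ (K + i + 1 - K) := Nat.dvd_sub hd hK
        rw [show K + i + 1 - K = i + 1 by omega] at h2
        have := Nat.le_of_dvd (Nat.succ_pos i) h2
        omega
      have hfp := (hu (K+i+1) (by omega)).1 hnd
      rw [show K + i + 1 - 1 = K + i by omega] at hfp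
      rw [show K + (i+1) = K + i + 1 by omega, hfp, res_fp, ih hi, mulVecE_mulVecE, ← pow_succ']

lemma mulVecE_sumM {ι : Type*} (t : Finset ι) (F : ι → Matrix (Fin n) (Fin n) ℝ)
    (r : EuclideanSpace ℝ (Fin n)) :
    mulVecE (∑ s ∈ t, F s) r = ∑ s ∈ t, mulVecE (F s) r := by
  classical
  induction t using Finset.induction_on with
  | empty => ext i; simp [mulVecE, Matrix.mulVec, dotProduct]
  | insert _ _ hx ih =>
      rw [Finset.sum_insert hx, Finset.sum_insert hx, ← ih]
      ext i
      simp only [mulVecE, Matrix.add_mulVec]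
      rfl

lemma mulVecE_smulM (c : ℝ) (N : Matrix (Fin n) (Fin n) ℝ) (r : EuclideanSpace ℝ (Fin n)) :
    mulVecE (c • N) r = c • mulVecE N r := by
  ext i
  simp only [mulVecE, Matrix.smul_mulVec]
  simp [Matrix.smul_mulVec]

lemma ngObj_poly (K : ℕ) (r : EuclideanSpace ℝ (Fin n))
    (hres : ∀ i, i ≤ m → res A b (u (K + i)) = mulVecE ((1-A)^i) r)
    (p : Polynomial ℝ) (hdeg : p.natDegree ≤ m+1) (h1 : p.eval 1 = 1) :
    ngObj A b m u (K+m) (fun i => -(p.coeff (m - (i:ℕ)))) = ‖mulVecE (aeval (1-A) p) r‖ := by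
  have hdeg' : p.natDegree < m + 2 := by omega
  have hfp : res A b (fp A b (u (K+m))) = mulVecE ((1-A)^(m+1)) r := by
    rw [res_fp, hres m le_rfl, mulVecE_mulVecE, ← pow_succ']
  have hprev : ∀ i : Fin (m+1), res A b (u (K + m - (i:ℕ)))
      = mulVecE ((1-A)^(m - (i:ℕ))) r := by
    intro i
    rw [show K + m - (i:ℕ) = K + (m - (i:ℕ)) by omega, hres _ (Nat.sub_le _ _)]
  rw [ngObj]
  congr 1
  rw [hfp]
  simp_rw [hprev]
  have hRHS : mulVecE (aeval (1-A) p) r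
      = ∑ s ∈ Finset.range (m+2), p.coeff s • mulVecE ((1-A)^s) r := by
    rw [Polynomial.aeval_eq_sum_range' hdeg', mulVecE_sumM]
    exact Finset.sum_congr rfl fun s _ => mulVecE_smulM _ _ _
  have hsum1 : ∑ s ∈ Finset.range (m+2), p.coeff s = 1 := by
    have := Polynomial.eval_eq_sum_range' hdeg' (1:ℝ)
    simpa [h1] using this.symm
  have hreflc : ∑ i ∈ Finset.range (m+1), p.coeff (m - i)
      = ∑ s ∈ Finset.range (m+1), p.coeff s := by
    have := Finset.sum_range_reflect (fun s => p.coeff s) (m+1)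
    simpa using this
  have hreflW : ∑ i ∈ Finset.range (m+1), p.coeff (m - i) • mulVecE ((1-A)^(m - i)) r
      = ∑ s ∈ Finset.range (m+1), p.coeff s • mulVecE ((1-A)^s) r := by
    have := Finset.sum_range_reflect (fun s => p.coeff s • mulVecE ((1-A)^s) r) (m+1)
    simpa using this
  have hc : p.coeff (m+1) = 1 - ∑ i ∈ Finset.range (m+1), p.coeff (m - i) := by
    rw [hreflc]
    have h2 := Finset.sum_range_succ (fun s => p.coeff s) (m+1)
    rw [h2] at hsum1
    linarith
  rw [hRHS, Finset.sum_range_succ, ← hreflW, hc]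
  have hfin : ∀ i : Fin (m+1),
      (-(p.coeff (m - (i:ℕ)))) • (mulVecE ((1-A)^(m+1)) r - mulVecE ((1-A)^(m - (i:ℕ))) r)
      = p.coeff (m - (i:ℕ)) • mulVecE ((1-A)^(m - (i:ℕ))) r
        - p.coeff (m - (i:ℕ)) • mulVecE ((1-A)^(m+1)) r := by
    intro i
    rw [neg_smul, smul_sub]
    abel
  simp_rw [hfin]
  rw [Finset.sum_sub_distrib, ← Finset.sum_smul,
    Fin.sum_univ_eq_sum_range (fun i => p.coeff (m - i) • mulVecE ((1-A)^(m - i)) r),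
    Fin.sum_univ_eq_sum_range (fun i => p.coeff (m - i)),
    sub_smul, one_smul]
  abel
end Iter

section Step
variable {n m : ℕ} (A : Matrix (Fin n) (Fin n) ℝ) (b : EuclideanSpace ℝ (Fin n))
  (u : ℕ → EuclideanSpace ℝ (Fin n))

lemma step_poly (hu : aNGMRES A b (m : ℕ∞) (m+1) u) (j : ℕ)
    (p : Polynomial ℝ) (hdeg : p.natDegree ≤ m+1) (h1 : p.eval 1 = 1) :
    ‖res A b (u ((j+1)*(m+1)))‖ ≤ ‖mulVecE (aeval (1-A) p) (res A b (u (j*(m+1))))‖ := by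
  set K := j*(m+1) with hK
  have hkk : (j+1)*(m+1) = K + m + 1 := by ring
  have hdvd : (m+1) ∣ ((j+1)*(m+1)) := dvd_mul_left _ _
  have hstep := (hu ((j+1)*(m+1)) (by exact Nat.one_le_iff_ne_zero.2 (Nat.mul_ne_zero (Nat.succ_ne_zero j) (Nat.succ_ne_zero m)))).2 hdvd
  have hm' : (min ((m:ℕ∞)) (((((j+1)*(m+1)) : ℕ) : ℕ∞) - 1)).toNat = m := by
    rw [show ((((j+1)*(m+1)):ℕ):ℕ∞) - 1 = (((j+1)*(m+1) - 1 : ℕ) : ℕ∞) from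
      (ENat.coe_sub _ _).symm]
    rw [min_eq_left (by exact_mod_cast (by omega : m ≤ (j+1)*(m+1) - 1))]
    exact ENat.toNat_coe m
  rw [hm'] at hstep
  obtain ⟨β, hmin, heq⟩ := hstep
  have hprev : (j+1)*(m+1) - 1 = K + m := by omega
  rw [hprev] at heq hmin
  have hresk : res A b (u ((j+1)*(m+1)))
      = res A b (fp A b (u (K+m))) + ∑ i : Fin (m+1),
          β i • (res A b (fp A b (u (K+m))) - res A b (u (K + m - (i:ℕ)))) := by
    rw [heq, res_add]
    congr 1
    rw [mulVecE_sum]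
    exact Finset.sum_congr rfl fun i _ => by
      rw [mulVecE_smul, mulVecE_res_sub A b]
  have hobj : ‖res A b (u ((j+1)*(m+1)))‖ = ngObj A b m u (K+m) β := by
    rw [hresk]; rfl
  have hresi := res_iter A b u hu K (dvd_mul_left _ _)
  calc ‖res A b (u ((j+1)*(m+1)))‖ = ngObj A b m u (K+m) β := hobj
    _ ≤ ngObj A b m u (K+m) (fun i => -(p.coeff (m - (i:ℕ)))) := hmin _
    _ = ‖mulVecE (aeval (1-A) p) (res A b (u K))‖ :=
        ngObj_poly A b u K (res A b (u K)) hresi p hdeg h1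

lemma chi_nonneg (M : Matrix (Fin n) (Fin n) ℝ) (s : ℕ) : 0 ≤ chiSp M s := by
  apply Real.sInf_nonneg
  rintro t ⟨p, _, _, rfl⟩
  exact Real.sSup_nonneg (by rintro x ⟨y, _, rfl⟩; positivity)

lemma chiSet_nonempty (M : Matrix (Fin n) (Fin n) ℝ) (s : ℕ) :
    {t : ℝ | ∃ p : Polynomial ℝ, p.natDegree ≤ s ∧ p.eval 1 = 1 ∧
      t = sSup ((fun x => |p.eval x|) '' spectrum ℝ M)}.Nonempty :=
  ⟨_, ⟨1, by simp, by simp, rfl⟩⟩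

lemma res_le_chi (hA : A.PosDef) (hu : aNGMRES A b (m : ℕ∞) (m+1) u) (j : ℕ) :
    ‖res A b (u ((j+1)*(m+1)))‖ ≤
      chiSp (1 - A) (m+1) * ‖res A b (u (j*(m+1)))‖ := by
  have hM : (1 - A : Matrix (Fin n) (Fin n) ℝ).IsHermitian :=
    Matrix.isHermitian_one.sub hA.1
  set r := res A b (u (j*(m+1))) with hr
  have key : ∀ t ∈ {t : ℝ | ∃ p : Polynomial ℝ, p.natDegree ≤ m+1 ∧ p.eval 1 = 1 ∧
      t = sSup ((fun x => |p.eval x|) '' spectrum ℝ (1 - A))},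
      ‖res A b (u ((j+1)*(m+1)))‖ ≤ t * ‖r‖ := by
    rintro t ⟨p, hdeg, h1, rfl⟩
    exact (step_poly A b u hu j p hdeg h1).trans (spec_bound hM p r)
  rcases eq_or_lt_of_le (norm_nonneg r) with h0 | hpos
  · have hr0 : ‖r‖ = 0 := h0.symm
    obtain ⟨t0, ht0⟩ := chiSet_nonempty (1 - A) (m+1)
    have hz := key t0 ht0
    rw [hr0, mul_zero] at hz
    calc ‖res A b (u ((j+1)*(m+1)))‖ ≤ 0 := hz
      _ ≤ chiSp (1 - A) (m+1) * ‖r‖ := by rw [hr0, mul_zero]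
  · have hge : ‖res A b (u ((j+1)*(m+1)))‖ / ‖r‖ ≤ chiSp (1 - A) (m+1) := by
      apply le_csInf (chiSet_nonempty _ _)
      intro t ht
      rw [div_le_iff₀ hpos]
      exact key t ht
    calc ‖res A b (u ((j+1)*(m+1)))‖ = ‖res A b (u ((j+1)*(m+1)))‖ / ‖r‖ * ‖r‖ := by
          field_simp
      _ ≤ chiSp (1 - A) (m+1) * ‖r‖ :=
          mul_le_mul_of_nonneg_right hge (norm_nonneg r)
end Step

section Cheb
open Polynomial.Chebyshev

lemma T_natDegree_le : ∀ s : ℕ, (T ℝ (s:ℤ)).natDegree ≤ s := by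
  intro s
  induction s using Nat.twoStepInduction with
  | zero => simp [T_zero]
  | one => simp [T_one]
  | more k ih1 ih2 =>
      have h : T ℝ ((k:ℤ)+2) = 2 * Polynomial.X * T ℝ ((k:ℤ)+1) - T ℝ (k:ℤ) := T_add_two ℝ k
      rw [show ((k+2:ℕ):ℤ) = (k:ℤ)+2 by push_cast; ring, h]
      apply le_trans (Polynomial.natDegree_sub_le _ _)
      rw [max_le_iff]
      constructor
      · apply le_trans (Polynomial.natDegree_mul_le)
        have h2 : (2 * Polynomial.X : Polynomial ℝ).natDegree ≤ 1 := by
          apply le_trans (Polynomial.natDegree_mul_le)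
          simp
        have h3 : (T ℝ ((k:ℤ)+1)).natDegree ≤ k+1 := by
          rw [show ((k:ℤ)+1) = ((k+1:ℕ):ℤ) by push_cast; ring]
          exact ih2
        omega
      · omega

lemma T_eval_avg (y : ℝ) (hy : y ≠ 0) :
    ∀ s : ℕ, (T ℝ (s:ℤ)).eval ((y + y⁻¹)/2) = (y^s + y⁻¹^s)/2 := by
  intro s
  induction s using Nat.twoStepInduction with
  | zero => norm_num [T_zero]
  | one => simp [T_one]
  | more k ih1 ih2 =>
      have h : T ℝ ((k:ℤ)+2) = 2 * Polynomial.X * T ℝ ((k:ℤ)+1) - T ℝ (k:ℤ) := T_add_two ℝ k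
      rw [show ((k+2:ℕ):ℤ) = (k:ℤ)+2 by push_cast; ring, h]
      rw [Polynomial.eval_sub, Polynomial.eval_mul, Polynomial.eval_mul,
        Polynomial.eval_ofNat, Polynomial.eval_X]
      rw [show ((k:ℤ)+1) = ((k+1:ℕ):ℤ) by push_cast; ring, ih2, ih1]
      linear_combination (y⁻¹^k + y^k)/2 * mul_inv_cancel₀ hy
end Cheb

section ChiBound
open Polynomial.Chebyshev

lemma chi_le_of {n : ℕ} (M : Matrix (Fin n) (Fin n) ℝ) (s : ℕ) (c : ℝ)
    (hne : (spectrum ℝ M).Nonempty) (p : Polynomial ℝ)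
    (hdeg : p.natDegree ≤ s) (h1 : p.eval 1 = 1)
    (hb : ∀ x ∈ spectrum ℝ M, |p.eval x| ≤ c) : chiSp M s ≤ c := by
  have hbdd : BddBelow {t : ℝ | ∃ p : Polynomial ℝ, p.natDegree ≤ s ∧ p.eval 1 = 1 ∧
      t = sSup ((fun x => |p.eval x|) '' spectrum ℝ M)} := by
    refine ⟨0, ?_⟩
    rintro t ⟨q, _, _, rfl⟩
    exact Real.sSup_nonneg (by rintro x ⟨y, _, rfl⟩; positivity)
  have h2 : chiSp M s ≤ sSup ((fun x => |p.eval x|) '' spectrum ℝ M) :=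
    csInf_le hbdd ⟨p, hdeg, h1, rfl⟩
  refine h2.trans (csSup_le (hne.image _) ?_)
  rintro _ ⟨x, hx, rfl⟩
  exact hb x hx

lemma chi_le_cheb {n : ℕ} (hn : 0 < n) (A : Matrix (Fin n) (Fin n) ℝ) (hA : A.PosDef)
    (κ : ℝ) (hκ : κ = sSup (spectrum ℝ A) / sInf (spectrum ℝ A)) (s : ℕ) (hs : 1 ≤ s) :
    chiSp (1 - A) s ≤ 2 * ((Real.sqrt κ - 1) / (Real.sqrt κ + 1)) ^ s := by
  haveI : Nonempty (Fin n) := ⟨⟨0, hn⟩⟩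
  have hH := hA.1
  have hspecA : spectrum ℝ A = Set.range hH.eigenvalues := hH.spectrum_real_eq_range_eigenvalues
  have hAne : (spectrum ℝ A).Nonempty := hspecA ▸ Set.range_nonempty _
  have hAfin : (spectrum ℝ A).Finite := Matrix.finite_real_spectrum
  set a := sInf (spectrum ℝ A) with ha
  set bb := sSup (spectrum ℝ A) with hbb
  have ha_mem : a ∈ spectrum ℝ A := hAne.csInf_mem hAfin
  have hb_mem : bb ∈ spectrum ℝ A := hAne.csSup_mem hAfin
  have ha_pos : 0 < a := by
    rw [hspecA] at ha_mem
    obtain ⟨i, hi⟩ := ha_mem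
    rw [← hi]
    exact hA.eigenvalues_pos i
  have hab : a ≤ bb := csInf_le_csSup hAne hAfin.bddBelow hAfin.bddAbove
  have hbetween : ∀ μ ∈ spectrum ℝ A, a ≤ μ ∧ μ ≤ bb := fun μ hμ =>
    ⟨csInf_le hAfin.bddBelow hμ, le_csSup hAfin.bddAbove hμ⟩
  have hspecM : spectrum ℝ ((1 : Matrix (Fin n) (Fin n) ℝ) - A)
      = (fun μ => 1 - μ) '' spectrum ℝ A := by
    have h := spectrum.singleton_sub_eq A (1:ℝ)
    rw [_root_.map_one] at h
    rw [← h, Set.singleton_sub]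
  have hMne : (spectrum ℝ ((1 : Matrix (Fin n) (Fin n) ℝ) - A)).Nonempty := by
    rw [hspecM]; exact hAne.image _
  -- sqrt facts
  set sa := Real.sqrt a with hsa
  set sb := Real.sqrt bb with hsb
  have hsa_pos : 0 < sa := Real.sqrt_pos.2 ha_pos
  have hsb_pos : 0 < sb := Real.sqrt_pos.2 (lt_of_lt_of_le ha_pos hab)
  have hsa_sq : sa^2 = a := Real.sq_sqrt ha_pos.le
  have hsb_sq : sb^2 = bb := Real.sq_sqrt (lt_of_lt_of_le ha_pos hab).le
  have hsab : sa ≤ sb := Real.sqrt_le_sqrt hab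
  have hsqrtκ : Real.sqrt κ = sb / sa := by
    rw [hκ, Real.sqrt_div (lt_of_lt_of_le ha_pos hab).le]
  have hratio : (Real.sqrt κ - 1) / (Real.sqrt κ + 1) = (sb - sa) / (sb + sa) := by
    rw [hsqrtκ]
    have h1 : sb / sa - 1 = (sb - sa) / sa := by field_simp
    have h2 : sb / sa + 1 = (sb + sa) / sa := by field_simp
    rw [h1, h2, div_div_div_eq, mul_comm sa (sb + sa), mul_div_mul_right _ _ hsa_pos.ne']
  rcases eq_or_lt_of_le hab with heq | hlt
  · -- a = bb : all eigenvalues equal, bound is 0 with p = (a⁻¹ (X - (1-a)))^s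
    have hκ1 : κ = 1 := by rw [hκ, ← heq, div_self ha_pos.ne']
    have hc0 : 2 * ((Real.sqrt κ - 1) / (Real.sqrt κ + 1)) ^ s = 0 := by
      rw [hκ1, Real.sqrt_one]
      simp [zero_pow (by omega : s ≠ 0)]
    rw [hc0]
    set p : Polynomial ℝ := (Polynomial.C a⁻¹ * (Polynomial.X - Polynomial.C (1 - a)))^s with hp
    apply chi_le_of _ _ _ hMne p
    · rw [hp, Polynomial.natDegree_pow]
      have : (Polynomial.C a⁻¹ * (Polynomial.X - Polynomial.C (1 - a))).natDegree ≤ 1 :=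
        le_trans (Polynomial.natDegree_C_mul_le _ _) (le_of_eq (Polynomial.natDegree_X_sub_C _))
      calc s * (Polynomial.C a⁻¹ * (Polynomial.X - Polynomial.C (1 - a))).natDegree
          ≤ s * 1 := Nat.mul_le_mul_left s this
        _ = s := by omega
    · rw [hp]
      simp only [Polynomial.eval_pow, Polynomial.eval_mul, Polynomial.eval_C,
        Polynomial.eval_sub, Polynomial.eval_X]
      rw [show (1 : ℝ) - (1 - a) = a by ring, inv_mul_cancel₀ ha_pos.ne', one_pow]
    · rintro x hx
      rw [hspecM] at hx
      obtain ⟨μ, hμ, rfl⟩ := hx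
      have h2 := hbetween μ hμ
      have hμa : μ = a := le_antisymm (heq ▸ h2.2) h2.1
      rw [hp]
      simp only [Polynomial.eval_pow, Polynomial.eval_mul, Polynomial.eval_C,
        Polynomial.eval_sub, Polynomial.eval_X]
      rw [hμa, show (1 : ℝ) - a - (1 - a) = 0 by ring, mul_zero,
        zero_pow (by omega : s ≠ 0), abs_zero]
  · -- a < bb : Chebyshev polynomial
    have hba_pos : 0 < bb - a := by linarith
    have hsba_pos : 0 < sb - sa := by
      rcases lt_or_ge sa sb with h | h
      · linarith
      · exfalso
        have hsab2 : sa = sb := le_antisymm hsab h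
        rw [hsab2] at hsa_sq
        linarith
    set y : ℝ := (sb + sa) / (sb - sa) with hy
    have hy_pos : 0 < y := div_pos (by linarith) hsba_pos
    have hyinv : y⁻¹ = (sb - sa) / (sb + sa) := by
      rw [hy, inv_div]
    have hyinv_nonneg : 0 ≤ y⁻¹ := by rw [hyinv]; positivity
    set z : ℝ := (a + bb) / (bb - a) with hz
    have hz_avg : (y + y⁻¹)/2 = z := by
      rw [hy, inv_div, hz]
      rw [div_add_div _ _ hsba_pos.ne' (by positivity : (sb + sa) ≠ 0)]
      rw [div_div]
      rw [div_eq_div_iff (by positivity) hba_pos.ne']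
      linear_combination (-(4:ℝ)*a) * hsb_sq + 4*bb*hsa_sq
    set Ts := T ℝ (s:ℤ) with hTs
    have hTz : Ts.eval z = (y^s + y⁻¹^s)/2 := by
      rw [← hz_avg, hTs]
      exact T_eval_avg y hy_pos.ne' s
    have hTz_pos : 0 < Ts.eval z := by
      rw [hTz]
      have : 0 < y^s := pow_pos hy_pos s
      have : 0 ≤ y⁻¹^s := pow_nonneg hyinv_nonneg s
      positivity
    have hTz_inv_le : (Ts.eval z)⁻¹ ≤ 2 * (y⁻¹)^s := by
      rw [hTz]
      rw [show ((y^s + y⁻¹^s)/2)⁻¹ = 2 / (y^s + y⁻¹^s) by rw [inv_div]]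
      rw [div_le_iff₀ (by positivity : (0:ℝ) < y^s + y⁻¹^s)]
      have hy1 : 1 ≤ y * y⁻¹ * (y^s * y⁻¹^s) := by
        rw [mul_inv_cancel₀ hy_pos.ne', one_mul, ← mul_pow, mul_inv_cancel₀ hy_pos.ne', one_pow]
      have h2 : y⁻¹^s * y^s = 1 := by
        rw [← mul_pow, inv_mul_cancel₀ hy_pos.ne', one_pow]
      nlinarith [pow_nonneg hyinv_nonneg s, pow_pos hy_pos s]
    -- the polynomial
    set q : Polynomial ℝ := Polynomial.C ((a + bb - 2)/(bb - a))
        + Polynomial.C (2/(bb - a)) * Polynomial.X with hq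
    set p : Polynomial ℝ := Polynomial.C (Ts.eval z)⁻¹ * Ts.comp q with hp
    have hqdeg : q.natDegree ≤ 1 := by
      rw [hq]
      apply le_trans (Polynomial.natDegree_add_le _ _)
      simp only [Polynomial.natDegree_C, max_le_iff]
      exact ⟨Nat.zero_le _, le_trans (Polynomial.natDegree_C_mul_le _ _)
        (le_of_eq Polynomial.natDegree_X)⟩
    have hqeval : ∀ x : ℝ, q.eval x = (a + bb - 2)/(bb - a) + (2/(bb - a)) * x := by
      intro x; rw [hq]; simp
    have hpeval : ∀ x : ℝ, p.eval x = (Ts.eval z)⁻¹ * Ts.eval (q.eval x) := by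
      intro x; rw [hp]; simp [Polynomial.eval_comp]
    apply chi_le_of _ _ _ hMne p
    · rw [hp]
      apply le_trans (Polynomial.natDegree_C_mul_le _ _)
      rw [Polynomial.natDegree_comp]
      calc Ts.natDegree * q.natDegree ≤ s * 1 :=
        Nat.mul_le_mul (T_natDegree_le s) hqdeg
        _ = s := by omega
    · rw [hpeval 1, hqeval 1]
      rw [show (a + bb - 2)/(bb - a) + (2/(bb - a)) * 1 = (a + bb)/(bb - a) by
        rw [mul_one, ← add_div, sub_add_cancel]]
      rw [← hz]
      exact inv_mul_cancel₀ hTz_pos.ne'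
    · rintro x hx
      rw [hspecM] at hx
      obtain ⟨μ, hμ, rfl⟩ := hx
      obtain ⟨hμ1, hμ2⟩ := hbetween μ hμ
      rw [hpeval, hqeval]
      have harg : (a + bb - 2)/(bb - a) + (2/(bb - a)) * (1 - μ) = (a + bb - 2*μ)/(bb - a) := by
        field_simp; ring
      rw [harg]
      set w : ℝ := (a + bb - 2*μ)/(bb - a) with hw
      have hw1 : -1 ≤ w := by
        rw [hw, le_div_iff₀ hba_pos]
        linarith
      have hw2 : w ≤ 1 := by
        rw [hw, div_le_iff₀ hba_pos]
        linarith
      have hcos : Real.cos (Real.arccos w) = w := Real.cos_arccos hw1 hw2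
      have hTw : Ts.eval w = Real.cos ((s:ℤ) * Real.arccos w) := by
        conv_lhs => rw [← hcos]
        rw [hTs]
        exact Polynomial.Chebyshev.T_real_cos (Real.arccos w) (s:ℤ)
      rw [abs_mul, hTw, abs_of_nonneg (inv_nonneg.2 hTz_pos.le)]
      calc (Ts.eval z)⁻¹ * |Real.cos ((s:ℤ) * Real.arccos w)|
          ≤ (Ts.eval z)⁻¹ * 1 := by
            apply mul_le_mul_of_nonneg_left (Real.abs_cos_le_one _) (inv_nonneg.2 hTz_pos.le)
        _ = (Ts.eval z)⁻¹ := mul_one _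
        _ ≤ 2 * (y⁻¹)^s := hTz_inv_le
        _ = 2 * ((Real.sqrt κ - 1) / (Real.sqrt κ + 1)) ^ s := by
            rw [hratio, ← hyinv]
end ChiBound


/-- for A SPD with condition number κ = λ_max(A)/λ_min(A), the
aNGMRES(m, m+1) iterates satisfy
`‖r_{j(m+1)}‖ ≤ χ(m+1)^j ‖r₀‖ ≤ (2((√κ-1)/(√κ+1))^{m+1})^j ‖r₀‖`. -/
theorem stmt_17 {n m : ℕ} (hn : 0 < n) (A : Matrix (Fin n) (Fin n) ℝ)
    (hA : A.PosDef) (b : EuclideanSpace ℝ (Fin n)) (u : ℕ → EuclideanSpace ℝ (Fin n))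
    (hu : aNGMRES A b (m : ℕ∞) (m+1) u)
    (κ : ℝ) (hκ : κ = sSup (spectrum ℝ A) / sInf (spectrum ℝ A)) :
    ∀ j : ℕ, 1 ≤ j →
      ‖res A b (u (j * (m+1)))‖ ≤
        chiSp ((1 : Matrix (Fin n) (Fin n) ℝ) - A) (m+1) ^ j * ‖res A b (u 0)‖ ∧
      chiSp ((1 : Matrix (Fin n) (Fin n) ℝ) - A) (m+1) ^ j * ‖res A b (u 0)‖ ≤
        (2 * ((Real.sqrt κ - 1) / (Real.sqrt κ + 1)) ^ (m+1)) ^ j * ‖res A b (u 0)‖ := by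
  have hpart1 : ∀ j : ℕ, ‖res A b (u (j*(m+1)))‖ ≤
      chiSp ((1 : Matrix (Fin n) (Fin n) ℝ) - A) (m+1) ^ j * ‖res A b (u 0)‖ := by
    intro j
    induction j with
    | zero => simp
    | succ j ih =>
        calc ‖res A b (u ((j+1)*(m+1)))‖
            ≤ chiSp (1 - A) (m+1) * ‖res A b (u (j*(m+1)))‖ := res_le_chi A b u hA hu j
          _ ≤ chiSp (1 - A) (m+1) * (chiSp (1 - A) (m+1)^j * ‖res A b (u 0)‖) :=
              mul_le_mul_of_nonneg_left ih (chi_nonneg _ _)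
          _ = chiSp (1 - A) (m+1)^(j+1) * ‖res A b (u 0)‖ := by ring
  have hchile := chi_le_cheb hn A hA κ hκ (m+1) (by omega)
  intro j _
  refine ⟨hpart1 j, ?_⟩
  apply mul_le_mul_of_nonneg_right _ (norm_nonneg _)
  exact pow_le_pow_left₀ (chi_nonneg _ _) hchile j

end
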